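/- Let m be a natural number and λ : Fin (2m) → Bool a balanced word (exactly m indices map to true and m to false). Then (1/N^m)·⟨e_N, a^λ e_N⟩ → 1 as N → ∞. -/

import Mathlib

open MeasureTheory Filter

noncomputable def e (n : ℕ) : ℕ →₀ ℝ := Finsupp.single n 1

noncomputable def innerF (f g : ℕ →₀ ℝ) : ℝ := f.sum fun n c => c * g n

noncomputable def ann : (ℕ →₀ ℝ) →ₗ[ℝ] (ℕ →₀ ℝ) :=
  Finsupp.lsum ℝ fun n => Real.sqrt n • (Finsupp.lsingle (n - 1) : ℝ →ₗ[ℝ] (ℕ →₀ ℝ))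

noncomputable def cre : (ℕ →₀ ℝ) →ₗ[ℝ] (ℕ →₀ ℝ) :=
  Finsupp.lsum ℝ fun n => Real.sqrt (n + 1) • (Finsupp.lsingle (n + 1) : ℝ →ₗ[ℝ] (ℕ →₀ ℝ))


noncomputable def wordOp {k : ℕ} (lam : Fin k → Bool) : (ℕ →₀ ℝ) →ₗ[ℝ] (ℕ →₀ ℝ) :=
  (List.ofFn fun i => if lam i then cre else ann).foldr (· ∘ₗ ·) LinearMap.id


lemma ann_e (n : ℕ) : ann (e n) = Real.sqrt n • e (n - 1) := by
  simp [ann, e, Finsupp.lsum_single]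
lemma cre_e (n : ℕ) : cre (e n) = Real.sqrt (n + 1) • e (n + 1) := by
  simp [cre, e, Finsupp.lsum_single]


noncomputable def opOf (b : Bool) : (ℕ →₀ ℝ) →ₗ[ℝ] (ℕ →₀ ℝ) := if b then cre else ann

lemma sqrt_pow_le {u v : ℕ} {c : ℝ} (h : u ≤ v) (k : ℕ)
    (hc : Real.sqrt v ^ k ≤ c) : Real.sqrt u ^ k ≤ c :=
  le_trans (pow_le_pow_left₀ (Real.sqrt_nonneg _)
    (Real.sqrt_le_sqrt (by exact_mod_cast h)) _) hc

lemma le_sqrt_pow {u v : ℕ} {c : ℝ} (h : u ≤ v) (k : ℕ)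
    (hc : c ≤ Real.sqrt u ^ k) : c ≤ Real.sqrt v ^ k :=
  le_trans hc (pow_le_pow_left₀ (Real.sqrt_nonneg _)
    (Real.sqrt_le_sqrt (by exact_mod_cast h)) _)

lemma key (L : List Bool) : ∀ N : ℕ, L.length ≤ N → ∃ c : ℝ,
    ((L.map opOf).foldr (· ∘ₗ ·) LinearMap.id) (e N)
      = c • e (N + L.count true - L.count false)
    ∧ (Real.sqrt ((N - L.length : ℕ))) ^ L.length ≤ c
    ∧ c ≤ (Real.sqrt ((N + L.length : ℕ))) ^ L.length := by
  induction L with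
  | nil => intro N _; exact ⟨1, by simp, by simp, by simp⟩
  | cons b L ih =>
    intro N hN
    have hN' : L.length ≤ N := by simp at hN; omega
    obtain ⟨c, hc, h1, h2⟩ := ih N hN'
    have hf := L.count_le_length (a := false)
    have ht := L.count_le_length (a := true)
    have hNlen : L.length + 1 ≤ N := by simpa using hN
    have hcn : 0 ≤ c := le_trans (pow_nonneg (Real.sqrt_nonneg _) _) h1
    have hstep : (((b :: L).map opOf).foldr (· ∘ₗ ·) LinearMap.id) (e N)
        = opOf b (c • e (N + L.count true - L.count false)) := by
      simp only [List.map_cons, List.foldr_cons, LinearMap.comp_apply]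
      rw [hc]
    cases b with
    | false =>
      refine ⟨Real.sqrt ((N + L.count true - L.count false : ℕ)) * c, ?_, ?_, ?_⟩
      · rw [hstep]
        show ann (c • e _) = _
        rw [_root_.map_smul, ann_e, smul_smul, mul_comm]
        congr 2
        have : (false :: L).count true = L.count true := by simp [List.count_cons]
        have h2' : (false :: L).count false = L.count false + 1 := by simp [List.count_cons]
        rw [this, h2']
        omega
      · calc Real.sqrt ((N - (false::L).length : ℕ)) ^ (false::L).length
            = Real.sqrt ((N - (L.length + 1) : ℕ)) * Real.sqrt ((N - (L.length+1) : ℕ)) ^ L.length := by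
              simp only [List.length_cons]; rw [pow_succ]; ring
          _ ≤ _ := mul_le_mul
              (Real.sqrt_le_sqrt (by exact_mod_cast (by omega : N - (L.length+1) ≤ N + L.count true - L.count false)))
              (sqrt_pow_le (by omega) _ h1)
              (pow_nonneg (Real.sqrt_nonneg _) _) (Real.sqrt_nonneg _)
      · calc Real.sqrt ((N + L.count true - L.count false : ℕ)) * c
            ≤ Real.sqrt ((N + (L.length+1) : ℕ)) * Real.sqrt ((N + (L.length+1) : ℕ)) ^ L.length :=
              mul_le_mul
                (Real.sqrt_le_sqrt (by exact_mod_cast (by omega : N + L.count true - L.count false ≤ N + (L.length+1))))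
                (le_sqrt_pow (by omega) _ h2) hcn (Real.sqrt_nonneg _)
          _ = Real.sqrt ((N + (false::L).length : ℕ)) ^ (false::L).length := by
              simp only [List.length_cons]; rw [pow_succ]; ring
    | true =>
      have hcast : ((N + L.count true - L.count false : ℕ) : ℝ) + 1
          = ((N + L.count true - L.count false + 1 : ℕ) : ℝ) := by push_cast; ring
      refine ⟨Real.sqrt ((N + L.count true - L.count false + 1 : ℕ)) * c, ?_, ?_, ?_⟩
      · rw [hstep]
        show cre (c • e _) = _
        rw [_root_.map_smul, cre_e, smul_smul, mul_comm, hcast]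
        congr 2
        have h1' : (true :: L).count true = L.count true + 1 := by simp [List.count_cons]
        have h2' : (true :: L).count false = L.count false := by simp [List.count_cons]
        rw [h1', h2']
        omega
      · calc Real.sqrt ((N - (true::L).length : ℕ)) ^ (true::L).length
            = Real.sqrt ((N - (L.length + 1) : ℕ)) * Real.sqrt ((N - (L.length+1) : ℕ)) ^ L.length := by
              simp only [List.length_cons]; rw [pow_succ]; ring
          _ ≤ _ := mul_le_mul
              (Real.sqrt_le_sqrt (by exact_mod_cast (by omega : N - (L.length+1) ≤ N + L.count true - L.count false + 1)))
              (sqrt_pow_le (by omega) _ h1)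
              (pow_nonneg (Real.sqrt_nonneg _) _) (Real.sqrt_nonneg _)
      · calc Real.sqrt ((N + L.count true - L.count false + 1 : ℕ)) * c
            ≤ Real.sqrt ((N + (L.length+1) : ℕ)) * Real.sqrt ((N + (L.length+1) : ℕ)) ^ L.length :=
              mul_le_mul
                (Real.sqrt_le_sqrt (by exact_mod_cast (by omega : N + L.count true - L.count false + 1 ≤ N + (L.length+1))))
                (le_sqrt_pow (by omega) _ h2) hcn (Real.sqrt_nonneg _)
          _ = Real.sqrt ((N + (true::L).length : ℕ)) ^ (true::L).length := by
              simp only [List.length_cons]; rw [pow_succ]; ring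

lemma inner_smul (N : ℕ) (c : ℝ) : innerF (e N) (c • e N) = c := by
  simp [innerF, e, Finsupp.sum_single_index]

lemma count_ofFn_true {k : ℕ} (lam : Fin k → Bool) :
    (List.ofFn lam).count true = (Finset.univ.filter fun i => lam i = true).card := by
  rw [List.ofFn_eq_map, List.count_eq_countP, List.countP_map, Fin.univ_def]
  simp [Finset.card_filter, Finset.filter, Multiset.countP_eq_card_filter,
    List.countP_eq_length_filter]
  congr 1

lemma count_ofFn_false {k : ℕ} (lam : Fin k → Bool) :
    (List.ofFn lam).count false = (Finset.univ.filter fun i => lam i = false).card := by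
  rw [List.ofFn_eq_map, List.count_eq_countP, List.countP_map, Fin.univ_def]
  simp [Finset.card_filter, Finset.filter, Multiset.countP_eq_card_filter,
    List.countP_eq_length_filter]
  congr 1

/-- For a balanced word `λ` of length `2m`, `(1/N^m)·⟨e_N, a^λ e_N⟩ → 1` as `N → ∞`. -/
theorem balanced_word_normalized_limit (m : ℕ) (lam : Fin (2 * m) → Bool)
    (htrue : (Finset.univ.filter fun i => lam i = true).card = m)
    (hfalse : (Finset.univ.filter fun i => lam i = false).card = m) :
    Tendsto (fun N : ℕ => innerF (e N) (wordOp lam (e N)) / (N : ℝ) ^ m)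
      atTop (nhds 1) := by
  set L : List Bool := List.ofFn lam with hL
  have hlen : L.length = 2 * m := by simp [hL]
  have hct : L.count true = m := by rw [hL, count_ofFn_true, htrue]
  have hcf : L.count false = m := by rw [hL, count_ofFn_false, hfalse]
  have hword : wordOp lam = (L.map opOf).foldr (· ∘ₗ ·) LinearMap.id := by
    rw [wordOp, hL, List.map_ofFn]; rfl
  -- the value equals some c_N with bounds
  have hmain : ∀ N : ℕ, 2 * m ≤ N →
      ((N - 2*m : ℕ) : ℝ) ^ m ≤ innerF (e N) (wordOp lam (e N)) ∧
      innerF (e N) (wordOp lam (e N)) ≤ ((N + 2*m : ℕ) : ℝ) ^ m := by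
    intro N hNm
    obtain ⟨c, hc, h1, h2⟩ := key L N (by omega)
    have hidx : N + L.count true - L.count false = N := by rw [hct, hcf]; omega
    have hval : innerF (e N) (wordOp lam (e N)) = c := by
      rw [hword, hc, hidx, inner_smul]
    have hsq : ∀ u : ℕ, (Real.sqrt u) ^ (2*m) = (u : ℝ) ^ m := by
      intro u
      rw [pow_mul, Real.sq_sqrt (Nat.cast_nonneg u)]
    rw [hlen] at h1 h2
    rw [hsq] at h1 h2
    exact ⟨hval ▸ h1, hval ▸ h2⟩
  have hlow : Tendsto (fun N : ℕ => ((N - 2*m : ℕ) : ℝ) ^ m / (N:ℝ) ^ m) atTop (nhds 1) := by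
    have h0 : Tendsto (fun N : ℕ => ((1:ℝ) - (2*m:ℝ)/N) ^ m) atTop (nhds 1) := by
      have := ((tendsto_const_nhds : Tendsto (fun _ : ℕ => (1:ℝ)) atTop (nhds 1)).sub (tendsto_const_div_atTop_nhds_zero_nat (2*m:ℝ))).pow m
      simpa using this
    apply h0.congr'
    filter_upwards [eventually_ge_atTop (2*m+1)] with N hN
    have hN0 : (N:ℝ) ≠ 0 := Nat.cast_ne_zero.mpr (by omega)
    rw [Nat.cast_sub (by omega), ← div_pow]
    congr 1
    push_cast
    field_simp
  have hhigh : Tendsto (fun N : ℕ => ((N + 2*m : ℕ) : ℝ) ^ m / (N:ℝ) ^ m) atTop (nhds 1) := by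
    have h0 : Tendsto (fun N : ℕ => ((1:ℝ) + (2*m:ℝ)/N) ^ m) atTop (nhds 1) := by
      have := ((tendsto_const_nhds : Tendsto (fun _ : ℕ => (1:ℝ)) atTop (nhds 1)).add (tendsto_const_div_atTop_nhds_zero_nat (2*m:ℝ))).pow m
      simpa using this
    apply h0.congr'
    filter_upwards [eventually_ge_atTop (2*m+1)] with N hN
    have hN0 : (N:ℝ) ≠ 0 := Nat.cast_ne_zero.mpr (by omega)
    rw [← div_pow]
    congr 1
    push_cast
    field_simp
  apply tendsto_of_tendsto_of_tendsto_of_le_of_le' hlow hhigh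
  · filter_upwards [eventually_ge_atTop (2*m)] with N hN
    have hpos : (0:ℝ) < (N:ℝ)^m := by
      rcases m with _ | m'
      · norm_num
      · have h0 : 0 < N := by omega
        have h0' : (0:ℝ) < N := by exact_mod_cast h0
        positivity
    exact div_le_div_of_nonneg_right (hmain N hN).1 hpos.le
  · filter_upwards [eventually_ge_atTop (2*m)] with N hN
    have hpos : (0:ℝ) < (N:ℝ)^m := by
      rcases m with _ | m'
      · norm_num
      · have h0 : 0 < N := by omega
        have h0' : (0:ℝ) < N := by exact_mod_cast h0
        positivity
    exact div_le_div_of_nonneg_right (hmain N hN).2 hpos.le
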